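/- The map Φ on 2×2 complex matrices defined by Φ([[a,b],[c,d]]) = [[(a+d)/2, λ₀b],[λ̄₀c, (a+d)/2]], where |λ₀| = 1, is a linear, unital, positive map. -/

import Mathlib

open ComplexOrder

lemma aux_smul_psd (r : ℝ) (hr : 0 ≤ r) {n : Type*} [Fintype n]
    {M : Matrix n n ℂ} (hM : M.PosSemidef) : ((r : ℂ) • M).PosSemidef := by
  rw [Matrix.posSemidef_iff_dotProduct_mulVec] at hM ⊢
  constructor
  · simp [Matrix.IsHermitian, Matrix.conjTranspose_smul, hM.1.eq, Complex.conj_ofReal]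
  · intro y
    rw [Matrix.smul_mulVec, dotProduct_smul, smul_eq_mul]
    exact mul_nonneg (by exact_mod_cast Complex.zero_le_real.mpr hr) (hM.2 y)

/-- The map Φ([[a,b],[c,d]]) = [[(a+d)/2, λ₀b],[λ̄₀c, (a+d)/2]] on M₂(ℂ),
with |λ₀| = 1, is linear, unital and positive. -/
theorem phi_linear_unital_positive (l : ℂ) (hl : ‖l‖ = 1) :
    IsLinearMap ℂ (fun x : Matrix (Fin 2) (Fin 2) ℂ =>
      !![(x 0 0 + x 1 1) / 2, l * x 0 1; (starRingEnd ℂ) l * x 1 0, (x 0 0 + x 1 1) / 2]) ∧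
    (!![((1 : Matrix (Fin 2) (Fin 2) ℂ) 0 0 + (1 : Matrix (Fin 2) (Fin 2) ℂ) 1 1) / 2,
        l * (1 : Matrix (Fin 2) (Fin 2) ℂ) 0 1;
        (starRingEnd ℂ) l * (1 : Matrix (Fin 2) (Fin 2) ℂ) 1 0,
        ((1 : Matrix (Fin 2) (Fin 2) ℂ) 0 0 + (1 : Matrix (Fin 2) (Fin 2) ℂ) 1 1) / 2]
      = (1 : Matrix (Fin 2) (Fin 2) ℂ)) ∧
    (∀ x : Matrix (Fin 2) (Fin 2) ℂ, x.PosSemidef →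
      Matrix.PosSemidef
        !![(x 0 0 + x 1 1) / 2, l * x 0 1;
           (starRingEnd ℂ) l * x 1 0, (x 0 0 + x 1 1) / 2]) := by
  have hll : (starRingEnd ℂ) l * l = 1 := by
    rw [mul_comm, Complex.mul_conj, Complex.normSq_eq_norm_sq, hl]
    norm_num
  refine ⟨⟨fun x y => ?_, fun c x => ?_⟩, ?_, fun x hx => ?_⟩
  · ext i j
    fin_cases i <;> fin_cases j <;>
      simp [Matrix.add_apply] <;> ring
  · ext i j
    fin_cases i <;> fin_cases j <;>
      simp [Matrix.smul_apply, smul_eq_mul] <;> ring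
  · ext i j
    fin_cases i <;> fin_cases j <;>
      simp [Matrix.one_apply]
  · set D : Matrix (Fin 2) (Fin 2) ℂ := !![1, 0; 0, (starRingEnd ℂ) l] with hD
    set P : Matrix (Fin 2) (Fin 2) ℂ := !![0, 1; 1, 0] with hP
    have hA := hx.mul_mul_conjTranspose_same D
    have hB := hA.transpose.mul_mul_conjTranspose_same P
    have key : ∀ z : ℂ, (starRingEnd ℂ) l * (z * l) = z := fun z => by
      rw [mul_comm z l, ← mul_assoc, hll, one_mul]
    have hS := aux_smul_psd (1/2) (by norm_num) (hA.add hB)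
    convert hS using 1
    ext i j
    fin_cases i <;> fin_cases j <;>
      simp [hD, hP, Matrix.mul_apply, Matrix.conjTranspose_apply, Fin.sum_univ_two,
        Matrix.vecMul, dotProduct, Matrix.vecHead, Matrix.vecTail, key] <;>
      ring
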